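/- Let a, b : ℝ³ → ℝ be smooth functions of (x, y, t) satisfying the system (MS2): ∂_x(a_t + a a_y + b a_x) = ∂_y(a_y) and ∂_x(b_t + b b_x − a b_y) = ∂_y(b_y − 2 a b_x). Consider ℝ⁴ with coordinates (x, y, t, λ) and the vector fields X₁ = ∂_t − (λ² − aλ − b)∂_x + m ∂_λ and X₂ = ∂_y − λ ∂_x + n ∂_λ, where m = −a_x λ² + (a a_x − a_y − b_x) λ + (a b_x − b_y) and n = −a_x λ − b_x. Then X₁ and X₂ commute identically on ℝ⁴. -/

import Mathlib

noncomputable section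

/-- Partial derivative of `f` along the `i`-th coordinate direction on `ℝⁿ`.
Coordinates on `ℝ³` are `(x, y, t) = (0, 1, 2)`; on `ℝ⁴` they are
`(x, y, t, λ) = (0, 1, 2, 3)`. -/
def pd {n : ℕ} (i : Fin n) (f : (Fin n → ℝ) → ℝ) : (Fin n → ℝ) → ℝ :=
  fun x => fderiv ℝ f x (Pi.single i 1)

/-- Lie bracket of vector fields on `ℝⁿ`:
`[X,Y](p) = (DY)(p)(X(p)) − (DX)(p)(Y(p))`. -/
def lieBr {n : ℕ} (X Y : (Fin n → ℝ) → (Fin n → ℝ)) :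
    (Fin n → ℝ) → (Fin n → ℝ) :=
  fun p => fderiv ℝ Y p (X p) - fderiv ℝ X p (Y p)

/-- Projection `(x, y, t, λ) ↦ (x, y, t)`. -/
def π3 (p : Fin 4 → ℝ) : Fin 3 → ℝ := ![p 0, p 1, p 2]

/-- First equation of system (MS2): `(a_t + a a_y + b a_x)_x = (a_y)_y`. -/
def MS2eq1 (a b : (Fin 3 → ℝ) → ℝ) : Prop :=
  ∀ x : Fin 3 → ℝ,
    pd 0 (fun y => pd 2 a y + a y * pd 1 a y + b y * pd 0 a y) x
      = pd 1 (pd 1 a) x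

/-- Second equation of system (MS2): `(b_t + b b_x − a b_y)_x = (b_y − 2 a b_x)_y`. -/
def MS2eq2 (a b : (Fin 3 → ℝ) → ℝ) : Prop :=
  ∀ x : Fin 3 → ℝ,
    pd 0 (fun y => pd 2 b y + b y * pd 0 b y - a y * pd 1 b y) x
      = pd 1 (fun y => pd 1 b y - 2 * a y * pd 0 b y) x

/-- `X₁ = ∂_t − (λ² − aλ − b)∂_x + m ∂_λ` with
`m = −a_x λ² + (a a_x − a_y − b_x)λ + (a b_x − b_y)`. -/
def ms2Lax1 (a b : (Fin 3 → ℝ) → ℝ) : (Fin 4 → ℝ) → (Fin 4 → ℝ) :=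
  fun p =>
    ![-((p 3) ^ 2 - a (π3 p) * p 3 - b (π3 p)), 0, 1,
      -(pd 0 a (π3 p)) * (p 3) ^ 2
        + (a (π3 p) * pd 0 a (π3 p) - pd 1 a (π3 p) - pd 0 b (π3 p)) * p 3
        + (a (π3 p) * pd 0 b (π3 p) - pd 1 b (π3 p))]

/-- `X₂ = ∂_y − λ∂_x + n ∂_λ` with `n = −a_x λ − b_x`. -/
def ms2Lax2 (a b : (Fin 3 → ℝ) → ℝ) : (Fin 4 → ℝ) → (Fin 4 → ℝ) :=
  fun p => ![-(p 3), 1, 0, -(pd 0 a (π3 p)) * p 3 - pd 0 b (π3 p)]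

/- ### auxiliary machinery -/

def π3L : (Fin 4 → ℝ) →L[ℝ] (Fin 3 → ℝ) :=
  ContinuousLinearMap.pi fun j : Fin 3 => ContinuousLinearMap.proj (Fin.castSucc j)

lemma π3_eq : π3 = ⇑π3L := by
  funext p j; fin_cases j <;> simp [π3, π3L] <;> rfl

@[fun_prop]
lemma differentiable_π3 : Differentiable ℝ π3 := by rw [π3_eq]; exact π3L.differentiable

lemma contDiff_pd {n : ℕ} (i : Fin n) {f : (Fin n → ℝ) → ℝ} (hf : ContDiff ℝ (⊤:ℕ∞) f) :
    ContDiff ℝ (⊤:ℕ∞) (pd i f) := by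
  unfold pd
  exact (hf.fderiv_right (m := (⊤:ℕ∞)) (by norm_cast)).clm_apply contDiff_const

lemma pd_comm {n : ℕ} (i j : Fin n) {f : (Fin n → ℝ) → ℝ} (hf : ContDiff ℝ (⊤:ℕ∞) f)
    (x : Fin n → ℝ) : pd i (pd j f) x = pd j (pd i f) x := by
  have hsymm : IsSymmSndFDerivAt ℝ f x := hf.contDiffAt.isSymmSndFDerivAt (by rw [minSmoothness_of_isRCLikeNormedField]; exact WithTop.coe_le_coe.mpr (le_top : (2:ℕ∞) ≤ ⊤))
  have key : ∀ u w : Fin n → ℝ,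
      fderiv ℝ (fun y => fderiv ℝ f y w) x u = fderiv ℝ (fderiv ℝ f) x u w := by
    intro u w
    rw [fderiv_clm_apply
      ((hf.fderiv_right (m := (⊤:ℕ∞)) (by norm_cast)).differentiable (by norm_cast) x)
      (differentiableAt_const w)]
    simp
  unfold pd
  rw [key, key, hsymm]

/-- directional derivative as combination of partials, on `ℝ³` -/
lemma fderiv3_apply (g : (Fin 3 → ℝ) → ℝ) (x w : Fin 3 → ℝ) :
    fderiv ℝ g x w = w 0 * pd 0 g x + w 1 * pd 1 g x + w 2 * pd 2 g x := by
  have hw : w = w 0 • (Pi.single 0 1 : Fin 3 → ℝ) + w 1 • (Pi.single 1 1 : Fin 3 → ℝ)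
      + w 2 • (Pi.single 2 1 : Fin 3 → ℝ) := by
    funext j; fin_cases j <;> simp [Pi.single_apply]
  conv_lhs => rw [hw]
  simp [pd, smul_eq_mul]

/-- directional derivative as combination of partials, on `ℝ⁴` -/
lemma fderiv4_apply (g : (Fin 4 → ℝ) → ℝ) (x w : Fin 4 → ℝ) :
    fderiv ℝ g x w = w 0 * pd 0 g x + w 1 * pd 1 g x + w 2 * pd 2 g x + w 3 * pd 3 g x := by
  have hw : w = w 0 • (Pi.single 0 1 : Fin 4 → ℝ) + w 1 • (Pi.single 1 1 : Fin 4 → ℝ)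
      + w 2 • (Pi.single 2 1 : Fin 4 → ℝ) + w 3 • (Pi.single 3 1 : Fin 4 → ℝ) := by
    funext j; fin_cases j <;> simp [Pi.single_apply]
  conv_lhs => rw [hw]
  simp [pd, smul_eq_mul]

/- ### applied rules for pd -/

section pdRules
variable {n : ℕ} {f g : (Fin n → ℝ) → ℝ} {x : Fin n → ℝ} {i : Fin n}

lemma pd_add (hf : DifferentiableAt ℝ f x) (hg : DifferentiableAt ℝ g x) :
    pd i (fun y => f y + g y) x = pd i f x + pd i g x := by
  unfold pd; rw [fderiv_fun_add hf hg]; rfl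

lemma pd_sub (hf : DifferentiableAt ℝ f x) (hg : DifferentiableAt ℝ g x) :
    pd i (fun y => f y - g y) x = pd i f x - pd i g x := by
  unfold pd; rw [fderiv_fun_sub hf hg]; rfl

lemma pd_mul (hf : DifferentiableAt ℝ f x) (hg : DifferentiableAt ℝ g x) :
    pd i (fun y => f y * g y) x = pd i f x * g x + f x * pd i g x := by
  unfold pd; rw [fderiv_fun_mul hf hg]
  simp [smul_eq_mul]; ring

lemma pd_neg : pd i (fun y => -f y) x = -pd i f x := by
  unfold pd; rw [fderiv_fun_neg]; rfl

lemma pd_const (c : ℝ) : pd i (fun _ => c) x = 0 := by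
  unfold pd; rw [fderiv_fun_const]; rfl

end pdRules

lemma pd_coord3 (i : Fin 4) (p : Fin 4 → ℝ) :
    pd i (fun q => q 3) p = if 3 = i then 1 else 0 := by
  have h : fderiv ℝ (fun q : Fin 4 → ℝ => q 3) p
      = (ContinuousLinearMap.proj 3 : (Fin 4 → ℝ) →L[ℝ] ℝ) :=
    (ContinuousLinearMap.proj 3 : (Fin 4 → ℝ) →L[ℝ] ℝ).fderiv
  unfold pd
  rw [h]
  simp [Pi.single_apply]

lemma fderiv_comp_π3 {g : (Fin 3 → ℝ) → ℝ} (hg : Differentiable ℝ g) (p v : Fin 4 → ℝ) :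
    fderiv ℝ (fun q => g (π3 q)) p v = fderiv ℝ g (π3 p) (π3 v) := by
  rw [π3_eq]
  have h : (fun q => g (π3L q)) = g ∘ π3L := rfl
  rw [h, fderiv_comp p (hg _) π3L.differentiableAt, π3L.fderiv]
  rfl

lemma pd0_comp {g : (Fin 3 → ℝ) → ℝ} (hg : Differentiable ℝ g) (p : Fin 4 → ℝ) :
    pd 0 (fun q => g (π3 q)) p = pd 0 g (π3 p) := by
  unfold pd
  rw [fderiv_comp_π3 hg]
  congr 1
  funext j; fin_cases j <;> simp [π3, Pi.single_apply]

lemma pd1_comp {g : (Fin 3 → ℝ) → ℝ} (hg : Differentiable ℝ g) (p : Fin 4 → ℝ) :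
    pd 1 (fun q => g (π3 q)) p = pd 1 g (π3 p) := by
  unfold pd
  rw [fderiv_comp_π3 hg]
  congr 1
  funext j; fin_cases j <;> simp [π3, Pi.single_apply]

lemma pd2_comp {g : (Fin 3 → ℝ) → ℝ} (hg : Differentiable ℝ g) (p : Fin 4 → ℝ) :
    pd 2 (fun q => g (π3 q)) p = pd 2 g (π3 p) := by
  unfold pd
  rw [fderiv_comp_π3 hg]
  congr 1
  funext j; fin_cases j <;> simp [π3, Pi.single_apply]

lemma pd3_comp {g : (Fin 3 → ℝ) → ℝ} (hg : Differentiable ℝ g) (p : Fin 4 → ℝ) :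
    pd 3 (fun q => g (π3 q)) p = 0 := by
  unfold pd
  rw [fderiv_comp_π3 hg]
  have h : π3 (Pi.single 3 1 : Fin 4 → ℝ) = 0 := by
    funext j; fin_cases j <;> simp [π3, Pi.single_apply]
  rw [h]
  simp

/-- component projection of fderiv of a vector field -/
lemma fderiv_comp_proj {Y : (Fin 4 → ℝ) → (Fin 4 → ℝ)} {p : Fin 4 → ℝ}
    (hY : ∀ j, DifferentiableAt ℝ (fun q => Y q j) p) (v : Fin 4 → ℝ) (i : Fin 4) :
    fderiv ℝ Y p v i = fderiv ℝ (fun q => Y q i) p v := by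
  have h : fderiv ℝ (fun q j => Y q j) p
      = ContinuousLinearMap.pi (fun j => fderiv ℝ (fun q => Y q j) p) := fderiv_pi hY
  have h2 : fderiv ℝ Y p = fderiv ℝ (fun q j => Y q j) p := rfl
  rw [h2, h]
  rfl

set_option maxHeartbeats 2000000 in
/-- If smooth `(a, b)` solves system (MS2), then the Lax fields `X₁, X₂` commute
identically on `ℝ⁴`. -/
theorem MS2_lax_commute
    (a b : (Fin 3 → ℝ) → ℝ)
    (ha : ContDiff ℝ (⊤ : ℕ∞) a)
    (hb : ContDiff ℝ (⊤ : ℕ∞) b)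
    (h1 : MS2eq1 a b)
    (h2 : MS2eq2 a b) :
    ∀ p : Fin 4 → ℝ, lieBr (ms2Lax1 a b) (ms2Lax2 a b) p = 0 := by
  intro p
  have hda : Differentiable ℝ a := ha.differentiable (by norm_cast)
  have hdb : Differentiable ℝ b := hb.differentiable (by norm_cast)
  have hdax : Differentiable ℝ (pd 0 a) := (contDiff_pd 0 ha).differentiable (by norm_cast)
  have hday : Differentiable ℝ (pd 1 a) := (contDiff_pd 1 ha).differentiable (by norm_cast)
  have hdat : Differentiable ℝ (pd 2 a) := (contDiff_pd 2 ha).differentiable (by norm_cast)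
  have hdbx : Differentiable ℝ (pd 0 b) := (contDiff_pd 0 hb).differentiable (by norm_cast)
  have hdby : Differentiable ℝ (pd 1 b) := (contDiff_pd 1 hb).differentiable (by norm_cast)
  have hdbt : Differentiable ℝ (pd 2 b) := (contDiff_pd 2 hb).differentiable (by norm_cast)
  have hX : ∀ j, DifferentiableAt ℝ (fun q => ms2Lax1 a b q j) p := by
    intro j; fin_cases j <;> simp [ms2Lax1] <;> fun_prop
  have hY : ∀ j, DifferentiableAt ℝ (fun q => ms2Lax2 a b q j) p := by
    intro j; fin_cases j <;> simp [ms2Lax2] <;> fun_prop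
  -- swapped second derivatives
  have s1 : ∀ x, pd 1 (pd 0 a) x = pd 0 (pd 1 a) x := fun x => pd_comm 1 0 ha x
  have s2 : ∀ x, pd 2 (pd 0 a) x = pd 0 (pd 2 a) x := fun x => pd_comm 2 0 ha x
  have s3 : ∀ x, pd 2 (pd 0 b) x = pd 0 (pd 2 b) x := fun x => pd_comm 2 0 hb x
  have s4 : ∀ x, pd 1 (pd 0 b) x = pd 0 (pd 1 b) x := fun x => pd_comm 1 0 hb x
  have h1x := h1 (π3 p)
  have h2x := h2 (π3 p)
  simp (disch := fun_prop) only [pd_add, pd_sub, pd_mul, pd_neg, pd_const] at h1x h2x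
  simp only [s1, s4] at h1x h2x
  funext i
  simp only [lieBr, Pi.sub_apply, Pi.zero_apply]
  rw [fderiv_comp_proj hY _ i, fderiv_comp_proj hX _ i]
  fin_cases i
  · simp (disch := fun_prop) [ms2Lax1, ms2Lax2, fderiv4_apply, pow_two,
        pd_add, pd_sub, pd_mul, pd_neg, pd_const,
        pd0_comp, pd1_comp, pd2_comp, pd3_comp, pd_coord3]
    ring
  · simp (disch := fun_prop) [ms2Lax1, ms2Lax2, fderiv4_apply, pow_two,
        pd_add, pd_sub, pd_mul, pd_neg, pd_const,
        pd0_comp, pd1_comp, pd2_comp, pd3_comp, pd_coord3]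
  · simp (disch := fun_prop) [ms2Lax1, ms2Lax2, fderiv4_apply, pow_two,
        pd_add, pd_sub, pd_mul, pd_neg, pd_const,
        pd0_comp, pd1_comp, pd2_comp, pd3_comp, pd_coord3]
  · simp (disch := fun_prop) [ms2Lax1, ms2Lax2, fderiv4_apply, pow_two,
        pd_add, pd_sub, pd_mul, pd_neg, pd_const,
        pd0_comp, pd1_comp, pd2_comp, pd3_comp, pd_coord3, s1, s2, s3, s4]
    linear_combination (-(p 3)) * h1x - h2x
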